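/- The q-exponentials satisfy exp_q(x) · exp_{q^{-1}}(-x) = 1 as formal power series, where exp_q(x) = Σ_{n≥0} x^n/(n)_q! with (n)_q = (1 - q^n)/(1 - q) and (n)_q! = (1)_q (2)_q ⋯ (n)_q, (0)_q! = 1. -/

import Mathlib

/-- `(k)_q = (1 - q^k)/(1 - q)`. -/
noncomputable def qNum (q : RatFunc ℚ) (k : ℕ) : RatFunc ℚ := (1 - q ^ k) / (1 - q)

/-- `(n)_q! = (1)_q (2)_q ⋯ (n)_q`, with `(0)_q! = 1`. -/
noncomputable def qNumFact (q : RatFunc ℚ) (n : ℕ) : RatFunc ℚ :=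
  ∏ k ∈ Finset.range n, qNum q (k + 1)

/-- The q-exponential `exp_q(x) = Σ_{n ≥ 0} x^n / (n)_q!` as a formal power series. -/
noncomputable def qExp (q : RatFunc ℚ) : PowerSeries (RatFunc ℚ) :=
  PowerSeries.mk fun n => (qNumFact q n)⁻¹

/-- `exp_{q⁻¹}(-x) = Σ_{n ≥ 0} (-1)^n x^n / (n)_{q⁻¹}!`. -/
noncomputable def qExpInvNeg (q : RatFunc ℚ) : PowerSeries (RatFunc ℚ) :=
  PowerSeries.mk fun n => (-1) ^ n * (qNumFact q⁻¹ n)⁻¹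

local notation "q" => (RatFunc.X : RatFunc ℚ)

lemma pow_ne_one' (n : ℕ) (hn : 1 ≤ n) : q ^ n ≠ 1 := by
  rw [RatFunc.X, ← map_pow, ← map_one (algebraMap (Polynomial ℚ) (RatFunc ℚ))]
  intro h
  have h2 : (Polynomial.X : Polynomial ℚ) ^ n = 1 := RatFunc.algebraMap_injective ℚ h
  have := congrArg Polynomial.natDegree h2
  simp [Polynomial.natDegree_X_pow] at this
  omega

lemma hq0 : q ≠ 0 := RatFunc.X_ne_zero
lemma hq1 : (1:RatFunc ℚ) - q ≠ 0 := by
  have := pow_ne_one' 1 le_rfl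
  simp only [pow_one] at this
  exact fun h => this (by linear_combination -h)
lemma hqn (n : ℕ) (hn : 1 ≤ n) : (1:RatFunc ℚ) - q ^ n ≠ 0 :=
  fun h => pow_ne_one' n hn (by linear_combination -h)
lemma hqi1 : (1:RatFunc ℚ) - q⁻¹ ≠ 0 := by
  intro h
  have : q⁻¹ = 1 := by linear_combination -h
  rw [inv_eq_one] at this
  exact (pow_ne_one' 1 le_rfl) (by simpa using this)
lemma hqin (n : ℕ) (hn : 1 ≤ n) : (1:RatFunc ℚ) - (q⁻¹) ^ n ≠ 0 := by
  intro h
  have : (q⁻¹) ^ n = 1 := by linear_combination -h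
  rw [inv_pow, inv_eq_one] at this
  exact pow_ne_one' n hn this

lemma F_succ (p : RatFunc ℚ) (n : ℕ) : qNumFact p (n+1) = qNumFact p n * qNum p (n+1) :=
  Finset.prod_range_succ _ _

lemma qNum_ne (k : ℕ) (hk : 1 ≤ k) : qNum q k ≠ 0 :=
  div_ne_zero (hqn k hk) hq1
lemma qNumi_ne (k : ℕ) (hk : 1 ≤ k) : qNum q⁻¹ k ≠ 0 :=
  div_ne_zero (hqin k hk) hqi1
lemma F_ne (n : ℕ) : qNumFact q n ≠ 0 :=
  Finset.prod_ne_zero_iff.2 fun k _ => qNum_ne (k+1) (Nat.le_add_left 1 k)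
lemma Fi_ne (n : ℕ) : qNumFact q⁻¹ n ≠ 0 :=
  Finset.prod_ne_zero_iff.2 fun k _ => qNumi_ne (k+1) (Nat.le_add_left 1 k)

lemma qNum_inv_eq (k : ℕ) : qNum q⁻¹ (k+1) * q ^ k = qNum q (k+1) := by
  rw [qNum, qNum]
  rw [div_mul_eq_mul_div, div_eq_div_iff hqi1 hq1]
  rw [inv_pow]
  have h1 : (q:RatFunc ℚ)^k * (q⁻¹)^k = 1 := by
    rw [← mul_pow, mul_inv_cancel₀ hq0, one_pow]
  have h2 : q * q⁻¹ = 1 := mul_inv_cancel₀ hq0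
  field_simp
  linear_combination (q*q⁻¹ - q⁻¹) * h1 + (1 - q^k) * h2

lemma Fact_inv_eq (n : ℕ) : qNumFact q⁻¹ n * q ^ (n.choose 2) = qNumFact q n := by
  induction n with
  | zero => simp [qNumFact]
  | succ m ih =>
    rw [F_succ, F_succ, ← ih, ← qNum_inv_eq m]
    have : (m+1).choose 2 = m.choose 2 + m := by
      rw [Nat.choose_succ_succ]
      simp [Nat.choose_one_right, Nat.add_comm]
    rw [this, pow_add]
    ring

lemma b_eq (j : ℕ) : (qNumFact q⁻¹ j)⁻¹ = q ^ (j.choose 2) * (qNumFact q j)⁻¹ := by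
  rw [← Fact_inv_eq j, mul_inv, mul_comm ((qNumFact q⁻¹ j)⁻¹), ← mul_assoc,
    mul_inv_cancel₀ (pow_ne_zero _ hq0), one_mul]



lemma F_zero : qNumFact q 0 = 1 := by simp [qNumFact]

lemma qkey {K : Type*} [Field K] (A B P E Fm Fr x : K) (hFm : Fm ≠ 0) (hFr : Fr ≠ 0)
    (hA : 1 - A ≠ 0) (hB : 1 - B ≠ 0) (hAB : 1 - A*B ≠ 0) (hx : 1 - x ≠ 0) :
    E * P * Fm⁻¹ * (Fr * ((1-B)/(1-x)))⁻¹ * (1-x) / (1-A*B)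
      + (Fr * ((1-B)/(1-x)))⁻¹ * (E * -1 * P * (Fm * ((1-A)/(1-x)))⁻¹)
    = E * -1 * (P * A) * (Fm * ((1-A)/(1-x)))⁻¹ * Fr⁻¹ * (1-x) / (1-A*B) := by
  have t1 : E * P * Fm⁻¹ * (Fr * ((1-B)/(1-x)))⁻¹ * (1-x) / (1-A*B)
      = (E*P*(1-x)^2) / (Fm*Fr*((1-B)*(1-A*B))) := by
    simp only [div_eq_mul_inv, mul_inv, inv_inv]; ring
  have t2 : (Fr * ((1-B)/(1-x)))⁻¹ * (E * -1 * P * (Fm * ((1-A)/(1-x)))⁻¹)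
      = (-(E*P)*(1-x)^2) / (Fm*Fr*((1-A)*(1-B))) := by
    simp only [div_eq_mul_inv, mul_inv, inv_inv]; ring
  have t3 : E * -1 * (P * A) * (Fm * ((1-A)/(1-x)))⁻¹ * Fr⁻¹ * (1-x) / (1-A*B)
      = (-(E*P*A)*(1-x)^2) / (Fm*Fr*((1-A)*(1-A*B))) := by
    simp only [div_eq_mul_inv, mul_inv, inv_inv]; ring
  rw [t1, t2, t3,
    div_add_div _ _ (mul_ne_zero (mul_ne_zero hFm hFr) (mul_ne_zero hB hAB))
      (mul_ne_zero (mul_ne_zero hFm hFr) (mul_ne_zero hA hB)),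
    div_eq_div_iff (mul_ne_zero (mul_ne_zero (mul_ne_zero hFm hFr) (mul_ne_zero hB hAB))
      (mul_ne_zero (mul_ne_zero hFm hFr) (mul_ne_zero hA hB)))
      (mul_ne_zero (mul_ne_zero hFm hFr) (mul_ne_zero hA hAB))]
  ring

lemma Gsum (n m : ℕ) (h : m + 1 ≤ n) :
    ∑ j ∈ Finset.range (m+1),
      (qNumFact q (n-j))⁻¹ * ((-1)^j * q^(j.choose 2) * (qNumFact q j)⁻¹)
    = (-1)^m * q^((m+1).choose 2) * (qNumFact q m)⁻¹ * (qNumFact q (n-1-m))⁻¹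
        * (1-q) / (1-q^n) := by
  induction m with
  | zero =>
    obtain ⟨r, rfl⟩ : ∃ r, n = r + 1 := ⟨n-1, by omega⟩
    rw [Finset.sum_range_one]
    simp only [Nat.sub_zero, pow_zero, one_mul, F_zero, Nat.choose_zero_right,
      Nat.add_sub_cancel, inv_one, mul_one]
    have h1 : (1:RatFunc ℚ) - q^(r+1) ≠ 0 := hqn (r+1) (by omega)
    rw [F_succ, qNum]
    have hc : Nat.choose 1 2 = 0 := rfl
    rw [hc, pow_zero, one_mul]
    field_simp [F_ne r]
    simp
  | succ m ih =>
    have hm : m + 1 ≤ n := by omega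
    obtain ⟨r, rfl⟩ : ∃ r, n = m + 2 + r := ⟨n - m - 2, by omega⟩
    have e1 : m + 2 + r - 1 - m = r + 1 := by omega
    have e2 : m + 2 + r - (m+1) = r + 1 := by omega
    have e3 : m + 2 + r - 1 - (m+1) = r := by omega
    have e4 : (m+2).choose 2 = (m+1).choose 2 + (m+1) := by
      rw [Nat.choose_succ_succ]; simp [Nat.add_comm]
    have h1 : (1:RatFunc ℚ) - q^(m+1) ≠ 0 := hqn (m+1) (by omega)
    have h2 : (1:RatFunc ℚ) - q^(r+1) ≠ 0 := hqn (r+1) (by omega)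
    have hAB : (q:RatFunc ℚ)^(m+2+r) = q^(m+1) * q^(r+1) := by
      rw [← pow_add]; congr 1; omega
    have h3 : (1:RatFunc ℚ) - q^(m+1) * q^(r+1) ≠ 0 := by
      rw [← hAB]; exact hqn (m+2+r) (by omega)
    have hE : ((-1 : RatFunc ℚ))^(m+1) = (-1)^m * (-1) := pow_succ _ _
    have hP : (q:RatFunc ℚ)^((m+1).choose 2 + (m+1)) = q^((m+1).choose 2) * q^(m+1) :=
      pow_add _ _ _
    have hFm := F_ne m
    have hFr := F_ne r
    rw [Finset.sum_range_succ, ih hm, e1, e2, e3, e4, hP, hE, F_succ q m, F_succ q r,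
      qNum, qNum, hAB]
    exact qkey _ _ _ _ (qNumFact q m) (qNumFact q r) _ hFm hFr h1 h2 h3 hq1

lemma qkey2 {K : Type*} [Field K] (A P E F x : K) (hF : F ≠ 0) (hA : 1-A ≠ 0)
    (hx : 1-x ≠ 0) :
    E * P * F⁻¹ * 1⁻¹ * (1-x) / (1-A) + 1⁻¹ * (E * -1 * P * (F*((1-A)/(1-x)))⁻¹) = 0 := by
  have t1 : E * P * F⁻¹ * 1⁻¹ * (1-x) / (1-A) = (E*P*(1-x))/(F*(1-A)) := by
    simp only [div_eq_mul_inv, mul_inv, inv_inv, inv_one]; ring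
  have t2 : 1⁻¹ * (E * -1 * P * (F*((1-A)/(1-x)))⁻¹) = (-(E*P)*(1-x))/(F*(1-A)) := by
    simp only [div_eq_mul_inv, mul_inv, inv_inv, inv_one]; ring
  rw [t1, t2, ← add_div, show E*P*(1-x) + -(E*P)*(1-x) = (0:K) from by ring, zero_div]

theorem stmt3 : qExp RatFunc.X * qExpInvNeg RatFunc.X = 1 := by
  ext n
  rw [PowerSeries.coeff_mul, PowerSeries.coeff_one]
  simp only [qExp, qExpInvNeg, PowerSeries.coeff_mk]
  rw [Finset.Nat.sum_antidiagonal_eq_sum_range_succ_mk]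
  cases n with
  | zero => simp [qNumFact]
  | succ t =>
    rw [if_neg (Nat.succ_ne_zero t)]
    rw [← Finset.sum_range_reflect]
    have hcong : ∀ j ∈ Finset.range (t+2),
        (qNumFact q (t + 2 - 1 - j))⁻¹ *
          ((-1)^(t+1 - (t + 2 - 1 - j)) * (qNumFact q⁻¹ (t+1 - (t + 2 - 1 - j)))⁻¹)
        = (qNumFact q (t+1-j))⁻¹ * ((-1)^j * q^(j.choose 2) * (qNumFact q j)⁻¹) := by
      intro j hj
      rw [Finset.mem_range] at hj
      have e1 : t + 2 - 1 - j = t + 1 - j := by omega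
      have e2 : t + 1 - (t + 1 - j) = j := by omega
      rw [e1, e2, b_eq]; ring
    rw [Finset.sum_congr rfl hcong, Finset.sum_range_succ, Gsum (t+1) t le_rfl]
    have e3 : t + 1 - 1 - t = 0 := by omega
    have e4 : t + 1 - (t+1) = 0 := by omega
    rw [e3, e4, F_zero,
      show ((-1 : RatFunc ℚ))^(t+1) = (-1)^t * (-1) from pow_succ _ _,
      F_succ q t, qNum]
    exact qkey2 _ _ _ _ _ (F_ne t) (hqn (t+1) (by omega)) hq1
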